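/- For every 1 ≤ i ≤ m and every μ ∈ ℤ^{N+1} of the form μ = e_{m+1} + Σ_{j=i+1}^{m} Σ_{k=1}^{n_j} x_{j,k} e_{j,k}, the operator D_i enumerates the i-th block of the generalized twisted cube with its density sign: D_i(λ^μ) = Σ_{x ∈ B_{n_i, k_i(μ)}} ((−1)^{n_i} Π_{k=1}^{n_i} sgn(x_k)) · λ^{μ + ⟨x, e_i⟩}, the sum being over the finite set B_{n_i, k_i(μ)}. -/

import Mathlib

/-!
Generalized Bott manifold data: `m ≥ 1`, block sizes `n : Fin m → ℕ` (each ≥ 1),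
integers `ℓ : Fin m → ℤ` and `c i j k` (used only for `i < j`).
The lattice `ℤ^{N+1}` is realized as functions `((Σ i, Fin (n i)) ⊕ Unit) → ℤ`,
with standard basis `E p`; `E (Sum.inr ())` is `e_{m+1}`.
-/

noncomputable section

namespace GB

variable (m : ℕ) (n : Fin m → ℕ)

/-- The double-index set for the coordinates `x_{i,k}`, `1 ≤ i ≤ m`, `1 ≤ k ≤ n_i`. -/
abbrev J : Type := Σ i : Fin m, Fin (n i)

/-- The lattice `ℤ^{N+1}`. -/
abbrev L : Type := (J m n ⊕ Unit) → ℤ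

/-- Standard basis vector of `ℤ^{N+1}`. -/
def E (p : J m n ⊕ Unit) : L m n := fun q => if q = p then 1 else 0

/-- The basis element `λ^μ` of the group ring `ℤ[ℤ^{N+1}]`. -/
def lam (μ : L m n) : AddMonoidAlgebra ℤ (L m n) := AddMonoidAlgebra.single μ 1

/-- `⟨x, e_i⟩ = Σ_k x_k e_{i,k}`. -/
def emb (i : Fin m) (z : Fin (n i) → ℤ) : L m n :=
  ∑ k : Fin (n i), z k • E m n (Sum.inl ⟨i, k⟩)

variable (ℓ : Fin m → ℤ) (c : (i j : Fin m) → Fin (n j) → ℤ)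

/-- `k_i(μ) = ℓ_i + Σ_{j=i+1}^m Σ_{k=1}^{n_j} c_{i,j}^{(k)} μ_{j,k}`. -/
def kfun (i : Fin m) (μ : L m n) : ℤ :=
  ℓ i + ∑ j : Fin m, ∑ k : Fin (n j), if i < j then c i j k * μ (Sum.inl ⟨j, k⟩) else 0

/-- `Δ⁻_{n,r} = {z ∈ ℤ_{≤0}^n : z_1 + ⋯ + z_n = -r}`. -/
def DeltaMinus (nn : ℕ) (r : ℤ) : Set (Fin nn → ℤ) :=
  {z | (∀ j, z j ≤ 0) ∧ ∑ j, z j = -r}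

/-- `Δ⁺_{n,r} = {z ∈ ℤ_{>0}^n : z_1 + ⋯ + z_n = r - 1}`. -/
def DeltaPlus (nn : ℕ) (r : ℤ) : Set (Fin nn → ℤ) :=
  {z | (∀ j, 0 < z j) ∧ ∑ j, z j = r - 1}

/-- The value of the operator `D_i` on the basis element `λ^μ`. -/
def Dsingle (i : Fin m) (μ : L m n) : AddMonoidAlgebra ℤ (L m n) :=
  if 0 ≤ kfun m n ℓ c i μ then
    ∑ r ∈ Finset.Icc (0 : ℤ) (kfun m n ℓ c i μ),
      ∑ᶠ z ∈ DeltaMinus (n i) r, lam m n (μ + emb m n i z)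
  else if -(n i : ℤ) ≤ kfun m n ℓ c i μ then 0
  else
    ∑ r ∈ Finset.Icc ((n i : ℤ) + 1) (-(kfun m n ℓ c i μ)),
      ∑ᶠ z ∈ DeltaPlus (n i) r, ((-1) ^ (n i) : ℤ) • lam m n (μ + emb m n i z)

/-- The ℤ-linear operator `D_i` on `ℤ[ℤ^{N+1}]`, extending `λ^μ ↦ Dsingle i μ`. -/
def Dop (i : Fin m) (f : AddMonoidAlgebra ℤ (L m n)) : AddMonoidAlgebra ℤ (L m n) :=
  Finsupp.sum f.coeff fun μ a => a • Dsingle m n ℓ c i μ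

/-- `A_i(x)`; for `i = m` the inner sum is empty, so `A_m(x) = -ℓ_m`. -/
def A (x : J m n → ℝ) (i : Fin m) : ℝ :=
  -(ℓ i + ∑ j : Fin m, ∑ k : Fin (n j), if i < j then (c i j k : ℝ) * x ⟨j, k⟩ else 0)

/-- The generalized twisted cube `C ⊆ ℝ^N`. -/
def C : Set (J m n → ℝ) :=
  {x | ∀ i : Fin m,
    (A m n ℓ c x i ≤ ∑ k, x ⟨i, k⟩ ∧ (∑ k, x ⟨i, k⟩) ≤ 0 ∧ ∀ k, x ⟨i, k⟩ ≤ 0) ∨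
    (0 < ∑ k, x ⟨i, k⟩ ∧ (∑ k, x ⟨i, k⟩) < A m n ℓ c x i ∧ ∀ k, 0 < x ⟨i, k⟩)}

/-- `sgn(t) = 1` if `t > 0`, `-1` if `t ≤ 0` (real argument). -/
def sgnR (t : ℝ) : ℤ := if 0 < t then 1 else -1

/-- `sgn(t) = 1` if `t > 0`, `-1` if `t ≤ 0` (integer argument). -/
def sgnZ (t : ℤ) : ℤ := if 0 < t then 1 else -1

open Classical in
/-- The density function `ρ` of the generalized twisted cube. -/
def rho (x : J m n → ℝ) : ℤ :=
  if x ∈ C m n ℓ c then (-1) ^ (∑ i, n i) * ∏ p : J m n, sgnR (x p) else 0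

end GB

end

namespace GB

/-- `B_{n,k} = {x ∈ ℤ^n : (−k ≤ Σ x ≤ 0 and all x_j ≤ 0) or (0 < Σ x < −k and all x_j > 0)}`. -/
def Bset (nn : ℕ) (k : ℤ) : Set (Fin nn → ℤ) :=
  {x | (-k ≤ ∑ j, x j ∧ (∑ j, x j) ≤ 0 ∧ ∀ j, x j ≤ 0) ∨
       (0 < ∑ j, x j ∧ (∑ j, x j) < -k ∧ ∀ j, 0 < x j)}

end GB


section Aux

open GB

lemma finite_deltaMinus (nn : ℕ) (r : ℤ) : (GB.DeltaMinus nn r).Finite := by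
  apply Set.Finite.subset (Set.Finite.pi (fun j : Fin nn => Set.finite_Icc (-r) (0 : ℤ)))
  rintro z ⟨h1, h2⟩ j _
  have hj : -z j ≤ ∑ k, -z k :=
    Finset.single_le_sum (f := fun k => -z k) (fun k _ => neg_nonneg.2 (h1 k)) (Finset.mem_univ j)
  rw [Finset.sum_neg_distrib, h2] at hj
  exact Set.mem_Icc.mpr ⟨by linarith, h1 j⟩

lemma finite_deltaPlus (nn : ℕ) (r : ℤ) : (GB.DeltaPlus nn r).Finite := by
  apply Set.Finite.subset (Set.Finite.pi (fun j : Fin nn => Set.finite_Icc (1 : ℤ) (r - 1)))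
  rintro z ⟨h1, h2⟩ j _
  have hj : z j ≤ ∑ k, z k :=
    Finset.single_le_sum (f := z) (fun k _ => le_of_lt (h1 k)) (Finset.mem_univ j)
  exact Set.mem_Icc.mpr ⟨h1 j, h2 ▸ hj⟩

lemma sum_pos_lb {nn : ℕ} {z : Fin nn → ℤ} (h : ∀ j, 0 < z j) : (nn : ℤ) ≤ ∑ j, z j := by
  calc (nn : ℤ) = ∑ _j : Fin nn, (1 : ℤ) := by simp
    _ ≤ ∑ j, z j := Finset.sum_le_sum fun j _ => h j

lemma bset_eq_minus (nn : ℕ) {K : ℤ} (hK : 0 ≤ K) :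
    GB.Bset nn K = ⋃ r ∈ (Finset.Icc (0 : ℤ) K : Set ℤ), GB.DeltaMinus nn r := by
  ext z
  simp only [GB.Bset, GB.DeltaMinus, Set.mem_setOf_eq, Set.mem_iUnion, Finset.coe_Icc,
    Set.mem_Icc, exists_prop]
  constructor
  · rintro (⟨h1, h2, h3⟩ | ⟨h1, h2, h3⟩)
    · exact ⟨-∑ j, z j, ⟨by omega, by omega⟩, h3, by ring⟩
    · omega
  · rintro ⟨r, ⟨hr0, hrK⟩, hz, hs⟩
    exact Or.inl ⟨by omega, by omega, hz⟩

lemma bset_eq_plus (nn : ℕ) (hnn : 1 ≤ nn) {K : ℤ} (hK : K < -(nn : ℤ)) :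
    GB.Bset nn K = ⋃ r ∈ (Finset.Icc ((nn : ℤ) + 1) (-K) : Set ℤ), GB.DeltaPlus nn r := by
  ext z
  simp only [GB.Bset, GB.DeltaPlus, Set.mem_setOf_eq, Set.mem_iUnion, Finset.coe_Icc,
    Set.mem_Icc, exists_prop]
  constructor
  · rintro (⟨h1, h2, h3⟩ | ⟨h1, h2, h3⟩)
    · omega
    · have := sum_pos_lb h3
      exact ⟨(∑ j, z j) + 1, ⟨by omega, by omega⟩, h3, by ring⟩
  · rintro ⟨r, ⟨hr0, hrK⟩, hz, hs⟩
    have := sum_pos_lb hz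
    exact Or.inr ⟨by omega, by omega, hz⟩

lemma bset_empty (nn : ℕ) (hnn : 1 ≤ nn) {K : ℤ} (h1 : K < 0) (h2 : -(nn : ℤ) ≤ K) :
    GB.Bset nn K = ∅ := by
  ext z
  simp only [GB.Bset, Set.mem_setOf_eq, Set.mem_empty_iff_false, iff_false]
  rintro (⟨g1, g2, g3⟩ | ⟨g1, g2, g3⟩)
  · omega
  · have := sum_pos_lb g3
    omega

end Aux

/-- For `μ = e_{m+1} + Σ_{j>i} Σ_k x_{j,k} e_{j,k}`, the operator `D_i`
enumerates the `i`-th block of the generalized twisted cube with its density sign: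
`D_i(λ^μ) = Σ_{z ∈ B_{n_i, k_i(μ)}} ((−1)^{n_i} Π_k sgn(z_k)) λ^{μ + ⟨z, e_i⟩}`. -/
theorem gbott_Dop_eq_block_sum
    (m : ℕ) (hm : 1 ≤ m) (n : Fin m → ℕ) (hn : ∀ i, 1 ≤ n i)
    (ℓ : Fin m → ℤ) (c : (i j : Fin m) → Fin (n j) → ℤ)
    (i : Fin m) (x : (j : Fin m) → Fin (n j) → ℤ)
    (μ : GB.L m n)
    (hμ : μ = GB.E m n (Sum.inr ()) +
        ∑ j : Fin m, ∑ k : Fin (n j),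
          (if i < j then x j k else 0) • GB.E m n (Sum.inl ⟨j, k⟩)) :
    GB.Dop m n ℓ c i (GB.lam m n μ) =
      ∑ᶠ z ∈ GB.Bset (n i) (GB.kfun m n ℓ c i μ),
        ((-1) ^ (n i) * ∏ k : Fin (n i), GB.sgnZ (z k)) •
          GB.lam m n (μ + GB.emb m n i z) := by
  have hD : GB.Dop m n ℓ c i (GB.lam m n μ) = GB.Dsingle m n ℓ c i μ := by
    unfold GB.Dop GB.lam
    rw [AddMonoidAlgebra.coeff_single, Finsupp.sum_single_index (by rw [zero_smul]), one_smul]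
  rw [hD]
  unfold GB.Dsingle
  set K := GB.kfun m n ℓ c i μ with hKdef
  split_ifs with h1 h2
  · -- 0 ≤ K
    rw [bset_eq_minus (n i) h1,
      finsum_mem_biUnion
        (fun a _ b _ hab => Set.disjoint_left.mpr fun z hza hzb => hab (by
          have := hza.2; have := hzb.2; omega))
        (Finset.finite_toSet _) (fun r _ => finite_deltaMinus (n i) r),
      finsum_mem_coe_finset]
    refine Finset.sum_congr rfl fun r _ => finsum_mem_congr rfl fun z hz => ?_
    have hprod : ∏ k : Fin (n i), GB.sgnZ (z k) = (-1) ^ (n i) := by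
      rw [Finset.prod_congr rfl fun k _ => show GB.sgnZ (z k) = -1 from
        if_neg (not_lt.mpr (hz.1 k))]
      simp
    rw [hprod, ← pow_add, Even.neg_one_pow ⟨n i, rfl⟩, one_smul]
  · -- mid case : Bset empty
    rw [bset_empty (n i) (hn i) (by omega) h2, finsum_mem_empty]
  · -- K < -(n i)
    rw [bset_eq_plus (n i) (hn i) (by omega),
      finsum_mem_biUnion
        (fun a _ b _ hab => Set.disjoint_left.mpr fun z hza hzb => hab (by
          have := hza.2; have := hzb.2; omega))
        (Finset.finite_toSet _) (fun r _ => finite_deltaPlus (n i) r),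
      finsum_mem_coe_finset]
    refine Finset.sum_congr rfl fun r _ => finsum_mem_congr rfl fun z hz => ?_
    have hprod : ∏ k : Fin (n i), GB.sgnZ (z k) = 1 := by
      rw [Finset.prod_congr rfl fun k _ => show GB.sgnZ (z k) = 1 from if_pos (hz.1 k)]
      simp
    rw [hprod, mul_one]
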